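/- For every n ≥ 1, every real inner product space V, and all families of unit vectors u_s ∈ V (s ∈ {0,1}^n) and v_t ∈ V (t ∈ {1,…,n}), one has (1/(n·2^n)) Σ_{s ∈ {0,1}^n} Σ_{t=1}^n (−1)^{s_t} ⟨u_s, v_t⟩ ≤ 1/√n. -/

import Mathlib

open BigOperators Finset
open scoped RealInnerProductSpace

private lemma eps_sign (a : ZMod 2) :
    (if a + 1 = 0 then (1 : ℝ) else -1) = -(if a = 0 then (1 : ℝ) else -1) := by
  rcases (by decide : ∀ b : ZMod 2, b = 0 ∨ b = 1) a with rfl | rfl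
  · rw [if_neg (by decide), if_pos rfl]
  · rw [if_pos (by decide), if_neg (by decide), neg_neg]

private lemma eps_orth {n : ℕ} {t t' : Fin n} (h : t ≠ t') :
    ∑ s : Fin n → ZMod 2,
      (if s t = 0 then (1 : ℝ) else -1) * (if s t' = 0 then (1 : ℝ) else -1) = 0 := by
  set f : (Fin n → ZMod 2) → ℝ :=
    fun s => (if s t = 0 then (1 : ℝ) else -1) * (if s t' = 0 then (1 : ℝ) else -1) with hf
  have hinv : Function.Involutive
      (fun s : Fin n → ZMod 2 => Function.update s t (s t + 1)) := by
    intro s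
    funext i
    by_cases hi : i = t
    · subst hi
      simp only [Function.update_self]
      have : (1 : ZMod 2) + 1 = 0 := by decide
      rw [add_assoc, this, add_zero]
    · simp [Function.update_of_ne hi]
  let σ := hinv.toPerm
  have h1 : ∑ s, f s = ∑ s, f (σ s) := (Equiv.sum_comp σ f).symm
  have h2 : ∀ s, f (σ s) = -f s := by
    intro s
    have ht : (σ s) t = s t + 1 := Function.update_self _ _ _
    have ht' : (σ s) t' = s t' := Function.update_of_ne (Ne.symm h) _ _
    simp only [hf, ht, ht', eps_sign, neg_mul]
  rw [funext h2] at h1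
  simp only [Finset.sum_neg_distrib] at h1
  linarith

/-- The vector (SDP) relaxation of the INDEX game: for any families of unit
vectors `u s` and `v t` in a real inner product space, the bias expression is at most
`1/√n`. -/
theorem index_game_vector_bias_le
    (n : ℕ) (hn : 1 ≤ n) (V : Type*) [NormedAddCommGroup V] [InnerProductSpace ℝ V]
    (u : (Fin n → ZMod 2) → V) (v : Fin n → V)
    (hu : ∀ s, ‖u s‖ = 1) (hv : ∀ t, ‖v t‖ = 1) :
    (1 / (n * 2 ^ n) : ℝ) * ∑ s : Fin n → ZMod 2, ∑ t : Fin n,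
      (if s t = 0 then (1 : ℝ) else -1) * ⟪u s, v t⟫
      ≤ 1 / Real.sqrt n := by
  classical
  set ε : (Fin n → ZMod 2) → Fin n → ℝ := fun s t => if s t = 0 then 1 else -1 with hε
  set w : (Fin n → ZMod 2) → V := fun s => ∑ t, ε s t • v t with hw
  have hcard : (Fintype.card (Fin n → ZMod 2) : ℝ) = 2 ^ n := by
    simp [Fintype.card_fun]
  -- step 1: inner sum rewrite
  have step1 : ∀ s, ∑ t, ε s t * ⟪u s, v t⟫ = ⟪u s, w s⟫ := by
    intro s
    rw [hw, inner_sum]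
    simp [real_inner_smul_right]
  -- step 2: Cauchy-Schwarz per s
  have step2 : ∀ s, ⟪u s, w s⟫ ≤ ‖w s‖ := by
    intro s
    calc ⟪u s, w s⟫ ≤ ‖u s‖ * ‖w s‖ := real_inner_le_norm _ _
    _ = ‖w s‖ := by rw [hu s, one_mul]
  -- step 4: sum of squared norms
  have step4 : ∑ s : Fin n → ZMod 2, ‖w s‖ ^ 2 = n * 2 ^ n := by
    have hws : ∀ s, ‖w s‖ ^ 2 = ∑ t, ∑ t', ε s t * ε s t' * ⟪v t, v t'⟫ := by
      intro s
      rw [← real_inner_self_eq_norm_sq, hw, sum_inner]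
      refine Finset.sum_congr rfl fun t _ => ?_
      rw [real_inner_smul_left, inner_sum, Finset.mul_sum]
      refine Finset.sum_congr rfl fun t' _ => ?_
      rw [real_inner_smul_right]; ring
    simp_rw [hws]
    rw [Finset.sum_comm]
    have : ∀ t : Fin n, ∑ s : Fin n → ZMod 2, ∑ t', ε s t * ε s t' * ⟪v t, v t'⟫
        = 2 ^ n := by
      intro t
      rw [Finset.sum_comm]
      have hdiag : ∑ s : Fin n → ZMod 2, ε s t * ε s t * ⟪v t, v t⟫ = 2 ^ n := by
        have h1 : ∀ s : Fin n → ZMod 2, ε s t * ε s t = 1 := by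
          intro s; simp only [hε]; by_cases h : s t = 0 <;> simp [h]
        have h2 : ⟪v t, v t⟫ = 1 := by
          rw [real_inner_self_eq_norm_sq, hv t]; norm_num
        simp [h1, h2, Finset.card_univ, Fintype.card_fun, hv]
      rw [← Finset.sum_erase_add _ _ (Finset.mem_univ t), hdiag]
      have hz : ∑ t' ∈ Finset.univ.erase t,
          ∑ s : Fin n → ZMod 2, ε s t * ε s t' * ⟪v t, v t'⟫ = 0 := by
        refine Finset.sum_eq_zero fun t' ht' => ?_
        have hne : t ≠ t' := (Finset.ne_of_mem_erase ht').symm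
        have := eps_orth hne
        rw [← Finset.sum_mul]
        simp only [hε] at this ⊢
        rw [this, zero_mul]
      rw [hz, zero_add]
    rw [Finset.sum_congr rfl fun t _ => this t]
    simp [mul_comm]
  -- step 3: Cauchy-Schwarz over s
  have step3 : ∑ s : Fin n → ZMod 2, ‖w s‖ ≤ 2 ^ n * Real.sqrt n := by
    have hsq : (∑ s : Fin n → ZMod 2, ‖w s‖) ^ 2
        ≤ (2 ^ n : ℝ) * (n * 2 ^ n) := by
      have := sq_sum_le_card_mul_sum_sq (s := (Finset.univ : Finset (Fin n → ZMod 2)))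
        (f := fun s => ‖w s‖)
      rw [step4] at this
      simpa [Finset.card_univ, hcard, Fintype.card_fun] using this
    have hnn : (0:ℝ) ≤ ∑ s : Fin n → ZMod 2, ‖w s‖ :=
      Finset.sum_nonneg fun s _ => norm_nonneg _
    have h2 : (2 ^ n * Real.sqrt n) ^ 2 = (2 ^ n : ℝ) * (n * 2 ^ n) := by
      rw [mul_pow, Real.sq_sqrt (Nat.cast_nonneg n)]; ring
    calc ∑ s : Fin n → ZMod 2, ‖w s‖
        = Real.sqrt ((∑ s : Fin n → ZMod 2, ‖w s‖) ^ 2) := (Real.sqrt_sq hnn).symm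
      _ ≤ Real.sqrt ((2 ^ n * Real.sqrt n) ^ 2) := Real.sqrt_le_sqrt (by rw [h2]; exact hsq)
      _ = 2 ^ n * Real.sqrt n := Real.sqrt_sq (by positivity)
  -- combine
  have hsum : ∑ s : Fin n → ZMod 2, ∑ t : Fin n,
      (if s t = 0 then (1 : ℝ) else -1) * ⟪u s, v t⟫ ≤ 2 ^ n * Real.sqrt n := by
    calc ∑ s : Fin n → ZMod 2, ∑ t : Fin n,
        (if s t = 0 then (1 : ℝ) else -1) * ⟪u s, v t⟫
        = ∑ s : Fin n → ZMod 2, ⟪u s, w s⟫ :=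
          Finset.sum_congr rfl fun s _ => step1 s
      _ ≤ ∑ s : Fin n → ZMod 2, ‖w s‖ := Finset.sum_le_sum fun s _ => step2 s
      _ ≤ 2 ^ n * Real.sqrt n := step3
  have hnpos : (0:ℝ) < n := by exact_mod_cast hn
  have hppos : (0:ℝ) < 2 ^ n := pow_pos two_pos n
  have hfactor : (0:ℝ) < (n : ℝ) * 2 ^ n := mul_pos hnpos hppos
  calc (1 / (n * 2 ^ n) : ℝ) * ∑ s : Fin n → ZMod 2, ∑ t : Fin n,
      (if s t = 0 then (1 : ℝ) else -1) * ⟪u s, v t⟫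
      ≤ (1 / (n * 2 ^ n) : ℝ) * (2 ^ n * Real.sqrt n) := by
        apply mul_le_mul_of_nonneg_left hsum
        positivity
    _ = Real.sqrt n / n := by field_simp
    _ = 1 / Real.sqrt n := by
        rw [eq_div_iff (by positivity : Real.sqrt n ≠ 0), div_mul_eq_mul_div,
          Real.mul_self_sqrt hnpos.le, div_self hnpos.ne']
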